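/- Let D₀ be a closed disk of radius r > 0 in the Euclidean plane ℝ², and let F be a finite family of closed disks, each of radius at least r and each having nonempty intersection with D₀. Then F can be partitioned into at most 6 subfamilies such that within each subfamily every two disks have nonempty intersection. -/

import Mathlib

open Metric Real Complex

lemma re_mul_conj_eq (z w : ℂ) :
    (z * (starRingEnd ℂ) w).re = ‖z‖ * ‖w‖ * Real.cos (z.arg - w.arg) := by
  conv_lhs => rw [← Complex.norm_mul_exp_arg_mul_I z, ← Complex.norm_mul_exp_arg_mul_I w]
  rw [map_mul, ← Complex.exp_conj]
  simp only [map_mul, Complex.conj_ofReal, Complex.conj_I, mul_neg]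
  rw [mul_mul_mul_comm, ← Complex.exp_add]
  have : (z.arg : ℂ) * I + -(↑w.arg * I) = ↑(z.arg - w.arg) * I := by push_cast; ring
  rw [this, ← Complex.ofReal_mul, Complex.re_ofReal_mul,
    Complex.exp_ofReal_mul_I_re]

lemma abs_sub_le_max (z w : ℂ) (h : |z.arg - w.arg| ≤ π / 3) :
    ‖z - w‖ ≤ max (‖z‖) (‖w‖) := by
  have hpi := Real.pi_pos
  have hcos : (1 : ℝ) / 2 ≤ Real.cos (z.arg - w.arg) := by
    have h1 : Real.cos |z.arg - w.arg| = Real.cos (z.arg - w.arg) := Real.cos_abs _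
    rw [← h1, ← Real.cos_pi_div_three]
    exact Real.cos_le_cos_of_nonneg_of_le_pi (abs_nonneg _) (by linarith) h
  have hre : ‖z‖ * ‖w‖ / 2 ≤ (z * (starRingEnd ℂ) w).re := by
    rw [re_mul_conj_eq]
    have := mul_nonneg (norm_nonneg z) (norm_nonneg w)
    nlinarith
  have hsq : (‖z - w‖)^2
      = (‖z‖)^2 + (‖w‖)^2 - 2 * (z * (starRingEnd ℂ) w).re := by
    simp only [Complex.sq_norm, Complex.normSq_sub]
  have hz := norm_nonneg z
  have hw := norm_nonneg w
  have hzw := norm_nonneg (z - w)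
  rcases le_total (‖z‖) (‖w‖) with hle | hle
  · rw [max_eq_right hle]; nlinarith
  · rw [max_eq_left hle]; nlinarith

/-- sector bounds -/
lemma sector_bounds (θ : ℝ) (h1 : -π < θ) (h2 : θ ≤ π) :
    ((min 5 ⌊(θ + π) / (π / 3)⌋ : ℤ) : ℝ) * (π / 3) ≤ θ + π ∧
      θ + π ≤ ((min 5 ⌊(θ + π) / (π / 3)⌋ : ℤ) + 1) * (π / 3) := by
  have hpi := Real.pi_pos
  have h3 : (0:ℝ) < π / 3 := by linarith
  set q : ℝ := (θ + π) / (π / 3) with hq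
  have hq1 : 0 < q := div_pos (by linarith) h3
  have hq2 : q ≤ 6 := by rw [hq, div_le_iff₀ h3]; linarith
  have hfl : (⌊q⌋ : ℝ) ≤ q := Int.floor_le q
  have hfu : q < ⌊q⌋ + 1 := Int.lt_floor_add_one q
  have hmul : θ + π = q * (π / 3) := by
    rw [hq, div_mul_cancel₀ _ (ne_of_gt h3)]
  rcases le_or_gt ⌊q⌋ 5 with h5 | h5
  · rw [min_eq_right h5]
    refine ⟨by rw [hmul]; gcongr, by rw [hmul]; push_cast; nlinarith⟩
  · rw [min_eq_left (by omega)]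
    have h6 : ⌊q⌋ = 6 := by
      have h7 : (⌊q⌋ : ℝ) ≤ 6 := hfl.trans hq2
      have h8 : ⌊q⌋ ≤ 6 := by exact_mod_cast h7
      omega
    have h9 : (6:ℝ) ≤ q := by
      have := hfl; rw [h6] at this; exact_mod_cast this
    have hq6 : q = 6 := le_antisymm hq2 h9
    constructor
    · rw [hmul, hq6]; push_cast; nlinarith
    · rw [hmul, hq6]; push_cast; nlinarith

/-- two closed balls with close enough centers intersect -/
lemma balls_inter {E : Type*} [NormedAddCommGroup E] [NormedSpace ℝ E]
    (x y : E) (a b : ℝ) (ha : 0 < a) (hb : 0 < b) (h : dist x y ≤ a + b) :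
    (closedBall x a ∩ closedBall y b).Nonempty := by
  have hd : ‖y - x‖ = dist x y := by rw [dist_eq_norm, norm_sub_rev]
  refine ⟨x + (a / (a + b)) • (y - x), ?_, ?_⟩
  · rw [mem_closedBall, dist_eq_norm]
    have h1 : x + (a / (a + b)) • (y - x) - x = (a / (a + b)) • (y - x) := by abel
    rw [h1, norm_smul, Real.norm_eq_abs, _root_.abs_of_nonneg (by positivity), hd,
      div_mul_eq_mul_div, div_le_iff₀ (by positivity)]
    nlinarith
  · rw [mem_closedBall, dist_eq_norm]
    have h1 : x + (a / (a + b)) • (y - x) - y = (a / (a + b) - 1) • (y - x) := by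
      rw [sub_smul, one_smul]; abel
    have he : a / (a + b) - 1 = -(b / (a + b)) := by field_simp; ring
    rw [h1, norm_smul, Real.norm_eq_abs, he, abs_neg,
      _root_.abs_of_nonneg (by positivity), hd,
      div_mul_eq_mul_div, div_le_iff₀ (by positivity)]
    nlinarith

/-- the complexification map -/
noncomputable def toC (x : EuclideanSpace ℝ (Fin 2)) : ℂ := ⟨x 0, x 1⟩

lemma dist_eq_abs_toC (x y : EuclideanSpace ℝ (Fin 2)) :
    dist x y = ‖toC x - toC y‖ := by
  rw [EuclideanSpace.dist_eq, Complex.norm_def, Complex.normSq_apply]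
  simp only [toC, Complex.sub_re, Complex.sub_im]
  rw [Fin.sum_univ_two]
  congr 1
  simp [Real.dist_eq, sq_abs]
  ring

lemma toC_sub (x y : EuclideanSpace ℝ (Fin 2)) : toC (x - y) = toC x - toC y := by
  simp [toC, Complex.ext_iff]

theorem disks_six_cliques (c₀ : EuclideanSpace ℝ (Fin 2)) (r : ℝ) (hr : 0 < r)
    (F : Finset (EuclideanSpace ℝ (Fin 2) × ℝ))
    (hrad : ∀ D ∈ F, r ≤ D.2)
    (hint : ∀ D ∈ F, (closedBall D.1 D.2 ∩ closedBall c₀ r).Nonempty) :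
    ∃ f : EuclideanSpace ℝ (Fin 2) × ℝ → Fin 6,
      ∀ D ∈ F, ∀ D' ∈ F, f D = f D' →
        (closedBall D.1 D.2 ∩ closedBall D'.1 D'.2).Nonempty := by
  have hpi := Real.pi_pos
  set g : EuclideanSpace ℝ (Fin 2) × ℝ → ℤ :=
    fun D => min 5 ⌊((toC (D.1 - c₀)).arg + π) / (π / 3)⌋ with hg
  have hg_range : ∀ D, 0 ≤ g D ∧ g D < 6 := by
    intro D
    have h1 : -π < (toC (D.1 - c₀)).arg := Complex.neg_pi_lt_arg _
    have h2 : (toC (D.1 - c₀)).arg ≤ π := Complex.arg_le_pi _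
    constructor
    · rw [hg]
      simp only [le_min_iff]
      refine ⟨by norm_num, Int.le_floor.2 ?_⟩
      push_cast
      exact div_nonneg (by linarith) (by positivity)
    · exact lt_of_le_of_lt (min_le_left _ _) (by norm_num)
  refine ⟨fun D => ⟨(g D).toNat, by have := hg_range D; omega⟩, ?_⟩
  intro D hD D' hD' hf
  have hgg : g D = g D' := by
    have h1 := hg_range D
    have h2 := hg_range D'
    simp only [Fin.mk.injEq] at hf
    omega
  have key : ∀ E ∈ F, dist E.1 c₀ ≤ E.2 + r := by
    intro E hE
    obtain ⟨p, hp1, hp2⟩ := hint E hE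
    calc dist E.1 c₀ ≤ dist E.1 p + dist p c₀ := dist_triangle _ _ _
      _ ≤ E.2 + r := add_le_add (mem_closedBall'.mp hp1) hp2
  have harg : |(toC (D.1 - c₀)).arg - (toC (D'.1 - c₀)).arg| ≤ π / 3 := by
    have b1 := sector_bounds (toC (D.1 - c₀)).arg (Complex.neg_pi_lt_arg _)
      (Complex.arg_le_pi _)
    have b2 := sector_bounds (toC (D'.1 - c₀)).arg (Complex.neg_pi_lt_arg _)
      (Complex.arg_le_pi _)
    rw [show min 5 ⌊((toC (D.1 - c₀)).arg + π) / (π / 3)⌋ = g D from rfl, hgg] at b1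
    rw [show min 5 ⌊((toC (D'.1 - c₀)).arg + π) / (π / 3)⌋ = g D' from rfl] at b2
    rw [abs_le]
    constructor <;> linarith [b1.1, b1.2, b2.1, b2.2]
  have habs := abs_sub_le_max _ _ harg
  have hz : ‖toC (D.1 - c₀)‖ = dist D.1 c₀ := by
    rw [toC_sub, ← dist_eq_abs_toC]
  have hw : ‖toC (D'.1 - c₀)‖ = dist D'.1 c₀ := by
    rw [toC_sub, ← dist_eq_abs_toC]
  have hzw : ‖toC (D.1 - c₀) - toC (D'.1 - c₀)‖ = dist D.1 D'.1 := by
    have h1 : toC (D.1 - c₀) - toC (D'.1 - c₀) = toC D.1 - toC D'.1 := by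
      rw [toC_sub, toC_sub]; ring
    rw [h1, ← dist_eq_abs_toC]
  rw [hz, hw, hzw] at habs
  have hd : dist D.1 D'.1 ≤ D.2 + D'.2 := by
    refine habs.trans ?_
    rcases max_cases (dist D.1 c₀) (dist D'.1 c₀) with ⟨h, _⟩ | ⟨h, _⟩ <;> rw [h]
    · linarith [key D hD, hrad D' hD']
    · linarith [key D' hD', hrad D hD]
  exact balls_inter _ _ _ _ (hr.trans_le (hrad D hD)) (hr.trans_le (hrad D' hD')) hd
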